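/- Combining the previous identities: if I - RᵀR ≻ 0 and I - SᵀS - (RᵀS)ᵀ(I-RᵀR)⁻¹(RᵀS) ⪰ 0, then for all w⁺, w⁻, G the weak inhomogeneous boundary term (w⁺)ᵀΛ⁺w⁺ + (w⁻)ᵀΛ⁻w⁻ + 2(√|Λ⁻|w⁻)ᵀ(√|Λ⁻|w⁻ - R√Λ⁺w⁺ - SG) is bounded below by -GᵀG. -/

import Mathlib

open Matrix

/-- Weak inhomogeneous boundary conditions: under the R- and S-conditions, the weak
boundary term is bounded below by `-GᵀG` for all `w⁺, w⁻, G`. -/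
theorem stmt9 (n m k : ℕ) (lp : Fin n → ℝ) (lm : Fin m → ℝ)
    (hlp : ∀ i, 0 ≤ lp i) (hlm : ∀ i, lm i ≤ 0)
    (R : Matrix (Fin m) (Fin n) ℝ) (S : Matrix (Fin m) (Fin k) ℝ)
    (hR : ((1 : Matrix (Fin n) (Fin n) ℝ) - Rᵀ * R).PosDef)
    (hS : ((1 : Matrix (Fin k) (Fin k) ℝ) - Sᵀ * S
        - (Rᵀ * S)ᵀ * (1 - Rᵀ * R)⁻¹ * (Rᵀ * S)).PosSemidef) :
    ∀ (wp : Fin n → ℝ) (wm : Fin m → ℝ) (G : Fin k → ℝ),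
    -(G ⬝ᵥ G) ≤
      ∑ i, lp i * (wp i) ^ 2 + ∑ i, lm i * (wm i) ^ 2 +
      2 * ∑ i, (Real.sqrt (-(lm i)) * wm i) *
        (Real.sqrt (-(lm i)) * wm i
          - (R.mulVec (fun j => Real.sqrt (lp j) * wp j)) i - (S.mulVec G) i) := by
  intro wp wm G
  set A : Matrix (Fin n) (Fin n) ℝ := 1 - Rᵀ * R with hA
  set u : Fin n → ℝ := fun j => Real.sqrt (lp j) * wp j with hu
  set v : Fin m → ℝ := fun i => Real.sqrt (-(lm i)) * wm i with hv
  have hAsym : Aᵀ = A := by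
    simp [hA, transpose_sub, transpose_mul]
  have hAinv : A * A⁻¹ = 1 := mul_nonsing_inv A ((isUnit_iff_isUnit_det A).1 hR.isUnit)
  -- notation
  set Bg : Fin n → ℝ := Rᵀ *ᵥ (S *ᵥ G) with hBg
  set w : Fin n → ℝ := A⁻¹ *ᵥ Bg with hw
  set z : Fin n → ℝ := u - w with hz
  set e : Fin m → ℝ := v - R *ᵥ u - S *ᵥ G with he
  -- basic rewrite of the sums
  have h1 : ∑ i, lp i * (wp i) ^ 2 = u ⬝ᵥ u := by
    unfold dotProduct
    refine Finset.sum_congr rfl fun i _ => ?_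
    have : Real.sqrt (lp i) * Real.sqrt (lp i) = lp i := Real.mul_self_sqrt (hlp i)
    simp only [hu]; nlinarith [this]
  have h2 : ∑ i, lm i * (wm i) ^ 2 = -(v ⬝ᵥ v) := by
    unfold dotProduct
    rw [← Finset.sum_neg_distrib]
    refine Finset.sum_congr rfl fun i _ => ?_
    have : Real.sqrt (-(lm i)) * Real.sqrt (-(lm i)) = -(lm i) :=
      Real.mul_self_sqrt (by linarith [hlm i])
    simp only [hv]; nlinarith [this]
  have h3 : ∑ i, v i * (v i - (R *ᵥ u) i - (S *ᵥ G) i)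
      = v ⬝ᵥ v - v ⬝ᵥ (R *ᵥ u) - v ⬝ᵥ (S *ᵥ G) := by
    unfold dotProduct
    rw [← Finset.sum_sub_distrib, ← Finset.sum_sub_distrib]
    exact Finset.sum_congr rfl fun i _ => by ring
  -- nonnegativity facts
  have hee : (0:ℝ) ≤ e ⬝ᵥ e := Finset.sum_nonneg fun i _ => mul_self_nonneg _
  have hzz : (0:ℝ) ≤ z ⬝ᵥ (A *ᵥ z) := by
    have := hR.posSemidef.dotProduct_mulVec_nonneg z
    simpa using this
  have hGG : (0:ℝ) ≤ G ⬝ᵥ (((1 : Matrix (Fin k) (Fin k) ℝ) - Sᵀ * S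
        - (Rᵀ * S)ᵀ * (1 - Rᵀ * R)⁻¹ * (Rᵀ * S)) *ᵥ G) := by
    have := hS.dotProduct_mulVec_nonneg G
    simpa using this
  -- algebraic expansions
  have symdot : ∀ x y : Fin n → ℝ, x ⬝ᵥ (A *ᵥ y) = (A *ᵥ x) ⬝ᵥ y := by
    intro x y
    rw [dotProduct_mulVec, ← mulVec_transpose, hAsym]
  have hAw : A *ᵥ w = Bg := by
    rw [hw, mulVec_mulVec, hAinv, one_mulVec]
  have huBg : u ⬝ᵥ Bg = (R *ᵥ u) ⬝ᵥ (S *ᵥ G) := by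
    rw [hBg, dotProduct_mulVec, vecMul_transpose]
  have hAu : u ⬝ᵥ (A *ᵥ u) = u ⬝ᵥ u - (R *ᵥ u) ⬝ᵥ (R *ᵥ u) := by
    rw [hA, sub_mulVec, one_mulVec, dotProduct_sub, ← mulVec_mulVec,
      dotProduct_mulVec, vecMul_transpose]
  have hzAz : z ⬝ᵥ (A *ᵥ z) = u ⬝ᵥ u - (R *ᵥ u) ⬝ᵥ (R *ᵥ u)
      - 2 * ((R *ᵥ u) ⬝ᵥ (S *ᵥ G)) + w ⬝ᵥ Bg := by
    have h4 : w ⬝ᵥ (A *ᵥ u) = Bg ⬝ᵥ u := by rw [symdot, hAw]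
    have h5 : Bg ⬝ᵥ u = u ⬝ᵥ Bg := dotProduct_comm _ _
    rw [hz, mulVec_sub, sub_dotProduct, dotProduct_sub, dotProduct_sub, hAw, hAu,
      h4, h5, huBg]
    ring
  have hMG : G ⬝ᵥ (((1 : Matrix (Fin k) (Fin k) ℝ) - Sᵀ * S
        - (Rᵀ * S)ᵀ * (1 - Rᵀ * R)⁻¹ * (Rᵀ * S)) *ᵥ G)
      = G ⬝ᵥ G - (S *ᵥ G) ⬝ᵥ (S *ᵥ G) - w ⬝ᵥ Bg := by
    have hterm : ((Rᵀ * S)ᵀ * (1 - Rᵀ * R)⁻¹ * (Rᵀ * S)) *ᵥ G = Sᵀ *ᵥ (R *ᵥ w) := by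
      rw [transpose_mul, ← hA, hw, hBg, transpose_transpose]
      rw [← mulVec_mulVec, ← mulVec_mulVec, ← mulVec_mulVec, ← mulVec_mulVec]
    rw [sub_mulVec, sub_mulVec, one_mulVec, dotProduct_sub, dotProduct_sub, hterm]
    have hS2 : G ⬝ᵥ ((Sᵀ * S) *ᵥ G) = (S *ᵥ G) ⬝ᵥ (S *ᵥ G) := by
      rw [← mulVec_mulVec, dotProduct_mulVec, vecMul_transpose]
    have hwBg : w ⬝ᵥ Bg = (R *ᵥ w) ⬝ᵥ (S *ᵥ G) := by
      rw [hBg, dotProduct_mulVec, vecMul_transpose]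
    have hS3 : G ⬝ᵥ (Sᵀ *ᵥ (R *ᵥ w)) = w ⬝ᵥ Bg := by
      rw [dotProduct_mulVec, vecMul_transpose, dotProduct_comm, hwBg]
    rw [hS2, hS3]
  have hee2 : e ⬝ᵥ e = v ⬝ᵥ v + (R *ᵥ u) ⬝ᵥ (R *ᵥ u) + (S *ᵥ G) ⬝ᵥ (S *ᵥ G)
      - 2 * (v ⬝ᵥ (R *ᵥ u)) - 2 * (v ⬝ᵥ (S *ᵥ G)) + 2 * ((R *ᵥ u) ⬝ᵥ (S *ᵥ G)) := by
    rw [he]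
    simp only [dotProduct_sub, sub_dotProduct]
    rw [dotProduct_comm (R *ᵥ u) v, dotProduct_comm (S *ᵥ G) v,
      dotProduct_comm (S *ᵥ G) (R *ᵥ u)]
    ring
  rw [h1, h2, h3]
  rw [hzAz] at hzz
  rw [hMG] at hGG
  rw [hee2] at hee
  linarith
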